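/- If the complete d-ary tree of height h can be black pebbled with p pebbles, then there is a deterministic thrifty k-way branching program with O(k^p) states (as k → ∞, with d, h, p fixed) solving the function problem FT_d^h(k), and hence also BT_d^h(k). -/

import Mathlib

/-! ## Fractional black-white pebbling -/

/-- A fractional pebble configuration: black and white pebble values on each node. -/
structure FConfig (V : Type) where
  b : V → ℝ
  w : V → ℝ

namespace FConfig

/-- Validity: all values nonnegative, total value of each node at most 1. -/
def Valid {V : Type} (C : FConfig V) : Prop :=
  ∀ v, 0 ≤ C.b v ∧ 0 ≤ C.w v ∧ C.b v + C.w v ≤ 1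

/-- Total pebble weight of a configuration. -/
noncomputable def weight {V : Type} [Fintype V] (C : FConfig V) : ℝ :=
  ∑ v, (C.b v + C.w v)

/-- The empty configuration. -/
def zero (V : Type) : FConfig V := ⟨fun _ => 0, fun _ => 0⟩

/-- A whole (non-fractional) configuration: all values 0 or 1. -/
def Whole {V : Type} (C : FConfig V) : Prop :=
  ∀ v, (C.b v = 0 ∨ C.b v = 1) ∧ (C.w v = 0 ∨ C.w v = 1)

/-- A black configuration: whole, and with no white pebbles. -/
def BlackOnly {V : Type} (C : FConfig V) : Prop :=
  C.Whole ∧ ∀ v, C.w v = 0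

end FConfig

/-- One legal move of the fractional black-white pebble game (no white sliding):
(i) decrease a black value; (ii) increase a white value; (iii) if every child of `v`
has total pebble value 1, decrease `w v` to 0 and/or increase `b v` arbitrarily while
simultaneously decreasing the black values of the children of `v` arbitrarily.
Here `child c v` means `c` is a child of `v`. -/
def FMove {V : Type} (child : V → V → Prop) (C C' : FConfig V) : Prop :=
  (∃ v, C'.b v ≤ C.b v ∧ C'.w v = C.w v ∧
     ∀ u, u ≠ v → C'.b u = C.b u ∧ C'.w u = C.w u) ∨
  (∃ v, C'.b v = C.b v ∧ C.w v ≤ C'.w v ∧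
     ∀ u, u ≠ v → C'.b u = C.b u ∧ C'.w u = C.w u) ∨
  (∃ v, (∀ c, child c v → C.b c + C.w c = 1) ∧
     C.b v ≤ C'.b v ∧ (C'.w v = 0 ∨ C'.w v = C.w v) ∧
     (∀ c, child c v → C'.b c ≤ C.b c ∧ C'.w c = C.w c) ∧
     (∀ u, u ≠ v → ¬ child u v → C'.b u = C.b u ∧ C'.w u = C.w u))

/-- The additional white sliding move: if `w v = 1`, `j` is a child of `v`, and every
child of `v` other than `j` has total pebble value 1, then set `w v = 0` and increase
`w j` so that `j` gets total pebble value 1. -/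
def WhiteSlide {V : Type} (child : V → V → Prop) (C C' : FConfig V) : Prop :=
  ∃ v j, child j v ∧ j ≠ v ∧ C.w v = 1 ∧
    (∀ c, child c v → c ≠ j → C.b c + C.w c = 1) ∧
    C'.w v = 0 ∧ C'.b v = C.b v ∧
    C'.b j = C.b j ∧ C.w j ≤ C'.w j ∧ C'.b j + C'.w j = 1 ∧
    (∀ u, u ≠ v → u ≠ j → C'.b u = C.b u ∧ C'.w u = C.w u)

/-- A pebbling of cost at most `p`, with moves given by `move`, all configurations
satisfying the extra constraint `Extra`, starting and ending with the empty
configuration and achieving `Goal` (a property of the whole sequence together with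
its length). -/
def PebblingLE {V : Type} [Fintype V] (move : FConfig V → FConfig V → Prop)
    (Extra : FConfig V → Prop) (Goal : (ℕ → FConfig V) → ℕ → Prop) (p : ℝ) : Prop :=
  ∃ (n : ℕ) (C : ℕ → FConfig V),
    C 0 = FConfig.zero V ∧ C n = FConfig.zero V ∧
    (∀ t ≤ n, (C t).Valid) ∧
    (∀ t ≤ n, Extra (C t)) ∧
    (∀ t < n, move (C t) (C (t + 1))) ∧
    Goal C n ∧
    (∀ t ≤ n, (C t).weight ≤ p)

/-! ## The complete `d`-ary tree of height `h` (with `h` levels) -/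

/-- Nodes of the complete `d`-ary tree with `h` levels: a level `l < h`
together with an index among the `d ^ l` nodes of that level. -/
abbrev TNode (d h : ℕ) := Σ l : Fin h, Fin (d ^ (l : ℕ))

/-- `c` is a child of `v` in the complete `d`-ary tree. -/
def IsChild (d h : ℕ) (c v : TNode d h) : Prop :=
  (c.1 : ℕ) = (v.1 : ℕ) + 1 ∧ ∃ j : Fin d, (c.2 : ℕ) = d * (v.2 : ℕ) + (j : ℕ)

/-- The root of the tree. -/
def troot (d h : ℕ) (hh : 0 < h) : TNode d h :=
  ⟨⟨0, hh⟩, ⟨0, by simp⟩⟩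

/-- The tree `T_d^h` has a black pebbling of cost at most `p`. -/
def BlackPebbles (d h : ℕ) (hh : 0 < h) (p : ℝ) : Prop :=
  PebblingLE (FMove (IsChild d h)) FConfig.BlackOnly
    (fun C n => ∃ t ≤ n, (C t).b (troot d h hh) = 1) p

/-- The tree `T_d^h` has a whole black-white pebbling (no white sliding)
of cost at most `p`. -/
def BWPebbles (d h : ℕ) (hh : 0 < h) (p : ℝ) : Prop :=
  PebblingLE (FMove (IsChild d h)) FConfig.Whole
    (fun C n => ∃ t ≤ n, (C t).b (troot d h hh) = 1) p

/-- The tree `T_d^h` has a fractional pebbling of cost at most `p`. -/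
def FRPebbles (d h : ℕ) (hh : 0 < h) (p : ℝ) : Prop :=
  PebblingLE (FMove (IsChild d h)) (fun _ => True)
    (fun C n => ∃ t ≤ n, (C t).b (troot d h hh) = 1) p

/-- Fractional pebbling of `T_d^h` where white sliding moves are also permitted. -/
def FRPebblesWS (d h : ℕ) (hh : 0 < h) (p : ℝ) : Prop :=
  PebblingLE (fun C C' => FMove (IsChild d h) C C' ∨ WhiteSlide (IsChild d h) C C')
    (fun _ => True)
    (fun C n => ∃ t ≤ n, (C t).b (troot d h hh) = 1) p

/-! ## Tree evaluation problems -/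

/-- The `k`-valued input variables of the tree evaluation problem on the complete
`d`-ary tree with `h` levels: the single variable of a height-1 tree is its leaf
value; for a tree of height `h+2`, a variable is either an entry `f_root(args)`
of the root function's table, or a variable of one of the `d` principal subtrees. -/
inductive TEVar (d k : ℕ) : ℕ → Type where
  | leaf : TEVar d k 1
  | root {h : ℕ} (args : Fin d → Fin k) : TEVar d k (h + 2)
  | child {h : ℕ} (j : Fin d) (x : TEVar d k (h + 1)) : TEVar d k (h + 2)

/-- The value of the root of the tree, computed bottom-up from an assignment of
values to all input variables. (For the degenerate height 0 it returns a junk value.) -/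
def rootValue (d k : ℕ) (hk : 0 < k) : (h : ℕ) → (TEVar d k h → Fin k) → Fin k
  | 0, _ => ⟨0, hk⟩
  | 1, I => I .leaf
  | (h + 2), I => I (.root fun j => rootValue d k hk (h + 1) fun x => I (.child j x))

/-- The Boolean tree evaluation problem `BT_d^h(k)`: does the root have value 1
(represented by `(0 : Fin k)`)? -/
def BTfun (d k : ℕ) (hk : 0 < k) (h : ℕ) (I : TEVar d k h → Fin k) : Bool :=
  decide (rootValue d k hk h I = ⟨0, hk⟩)

/-- `ThriftyVar d k hk h I v` holds iff querying variable `v` on input `I` is a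
thrifty query: if `v` is an entry `f_i(args)` of the function table of an internal
node `i`, then `args` must be the tuple of correct values of the children of `i`. -/
def ThriftyVar (d k : ℕ) (hk : 0 < k) : (h : ℕ) → (TEVar d k h → Fin k) → TEVar d k h → Prop
  | 0, _, _ => True
  | 1, _, _ => True
  | (h + 2), I, .root args =>
      args = fun j => rootValue d k hk (h + 1) fun x => I (.child j x)
  | (h + 2), I, .child j x =>
      ThriftyVar d k hk (h + 1) (fun y => I (.child j y)) x

/-! ## k-way branching programs -/

/-- A deterministic `k`-way branching program with input variables `V` (each taking
values in `[k] = Fin k`) and outputs in `R`. Each state is either a non-final state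
labelled with the variable it queries (`Sum.inl v`), with `k` outedges given by
`next`, or a final state labelled with an output (`Sum.inr r`). -/
structure DBP (V : Type) (k : ℕ) (R : Type) where
  Q : Type
  fin : Fintype Q
  start : Q
  label : Q → V ⊕ R
  next : Q → Fin k → Q

namespace DBP

variable {V : Type} {k : ℕ} {R : Type}

/-- The size of a branching program is its number of states. -/
def size (B : DBP V k R) : ℕ := @Fintype.card B.Q B.fin

/-- One deterministic step on input `I` (final states are absorbing). -/
def step (B : DBP V k R) (I : V → Fin k) (q : B.Q) : B.Q :=
  match B.label q with
  | .inl v => B.next q (I v)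
  | .inr _ => q

/-- `B` computes the total function `f`: on every input, the computation reaches the
final state labelled with the correct output. -/
def Computes (B : DBP V k R) (f : (V → Fin k) → R) : Prop :=
  ∀ I : V → Fin k, ∃ t : ℕ, B.label ((B.step I)^[t] B.start) = .inr (f I)

end DBP

/-- A nondeterministic `k`-way branching program: as in `DBP`, but a non-final state
may have any number of outedges with any labels in `Fin k`, given by the edge
relation `edge q a q'`. -/
structure NBP (V : Type) (k : ℕ) (R : Type) where
  Q : Type
  fin : Fintype Q
  start : Q
  label : Q → V ⊕ R
  edge : Q → Fin k → Q → Prop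

namespace NBP

variable {V : Type} {k : ℕ} {R : Type}

/-- The size of a branching program is its number of states. -/
def size (B : NBP V k R) : ℕ := @Fintype.card B.Q B.fin

/-- One nondeterministic step on input `I`: follow an edge out of a non-final state
whose label matches the value of the queried variable. -/
def Step (B : NBP V k R) (I : V → Fin k) (q q' : B.Q) : Prop :=
  ∃ v, B.label q = .inl v ∧ B.edge q (I v) q'

/-- Some computation of `B` on input `I` ends in a final state labelled `r`. -/
def Outputs (B : NBP V k R) (I : V → Fin k) (r : R) : Prop :=
  ∃ q, Relation.ReflTransGen (B.Step I) B.start q ∧ B.label q = .inr r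

/-- `B` computes the total function `f`: on every input some computation ends in a
final state, and every computation ending in a final state ends in the one labelled
with the correct output. -/
def Computes (B : NBP V k R) (f : (V → Fin k) → R) : Prop :=
  ∀ (I : V → Fin k) (r : R), B.Outputs I r ↔ r = f I

end NBP

/-- A deterministic branching program for a tree evaluation problem is thrifty if on
every input, every query made during the computation is a thrifty query. -/
def DBPThrifty {R : Type} (d k h : ℕ) (hk : 0 < k) (B : DBP (TEVar d k h) k R) : Prop :=
  ∀ (I : TEVar d k h → Fin k) (t : ℕ) (v : TEVar d k h),
    B.label ((B.step I)^[t] B.start) = .inl v → ThriftyVar d k hk h I v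

/-- A nondeterministic branching program for a tree evaluation problem is thrifty if
for every input, every computation ending in a final state makes only thrifty
queries. -/
def NBPThrifty {R : Type} (d k h : ℕ) (hk : 0 < k) (B : NBP (TEVar d k h) k R) : Prop :=
  ∀ (I : TEVar d k h → Fin k) (n : ℕ) (path : ℕ → B.Q),
    path 0 = B.start →
    (∀ t < n, B.Step I (path t) (path (t + 1))) →
    (∃ r, B.label (path n) = .inr r) →
    ∀ t < n, ∀ v, B.label (path t) = .inl v → ThriftyVar d k hk h I v


namespace BlackPebblingBP

inductive Node (d : ℕ) : ℕ → Type where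
  | rt {m : ℕ} : Node d (m + 1)
  | ch {m : ℕ} (j : Fin d) (a : Node d (m + 1)) : Node d (m + 2)

variable {d k : ℕ}

def nval (hk : 0 < k) : {m : ℕ} → (TEVar d k m → Fin k) → Node d m → Fin k
  | _, I, .rt => rootValue d k hk _ I
  | _, I, .ch j a => nval hk (fun x => I (.child j x)) a

def varAt : {m : ℕ} → Node d m → (Fin d → Fin k) → TEVar d k m
  | 1, .rt, _ => .leaf
  | _ + 2, .rt, args => .root args
  | _ + 2, .ch j a, args => .child j (varAt a args)

def childN : {m : ℕ} → Node d m → Fin d → Node d m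
  | 1, .rt, _ => .rt
  | _ + 2, .rt, j => .ch j .rt
  | _ + 2, .ch j a, j' => .ch j (childN a j')

def ht : {m : ℕ} → Node d m → ℕ
  | _, .rt (m := m0) => m0 + 1
  | _, .ch _ a => ht a

theorem nval_varAt (hk : 0 < k) : ∀ {m : ℕ} (a : Node d m) (I : TEVar d k m → Fin k),
    I (varAt a fun j => nval hk I (childN a j)) = nval hk I a := by
  intro m a
  induction a with
  | @rt m0 =>
    intro I
    cases m0 with
    | zero => rfl
    | succ m1 => rfl
  | @ch m0 j a ih =>
    intro I
    exact ih (fun x => I (.child j x))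

theorem thrifty_varAt (hk : 0 < k) : ∀ {m : ℕ} (a : Node d m) (I : TEVar d k m → Fin k),
    ThriftyVar d k hk m I (varAt a fun j => nval hk I (childN a j)) := by
  intro m a
  induction a with
  | @rt m0 =>
    intro I
    cases m0 with
    | zero => trivial
    | succ m1 => rfl
  | @ch m0 j a ih =>
    intro I
    exact ih (fun x => I (.child j x))

theorem varAt_irrel : ∀ {m : ℕ} (a : Node d m), ht a = 1 →
    ∀ args args' : Fin d → Fin k, varAt a args = varAt a args' := by
  intro m a
  induction a with
  | @rt m0 =>
    intro h args args'
    cases m0 with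
    | zero => rfl
    | succ m1 => simp [ht] at h
  | @ch m0 j a ih =>
    intro h args args'
    have h' : ht a = 1 := by simpa [ht] using h
    show TEVar.child j (varAt a args) = TEVar.child j (varAt a args')
    rw [ih h' args args']

theorem ht_childN : ∀ {m : ℕ} (a : Node d m) (j : Fin d), 2 ≤ ht a →
    ht (childN a j) = ht a - 1 := by
  intro m a
  induction a with
  | @rt m0 =>
    intro j h
    cases m0 with
    | zero => simp [ht] at h
    | succ m1 => simp [ht, childN]
  | @ch m0 j0 a ih =>
    intro j h
    have h' : 2 ≤ ht a := by simpa [ht] using h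
    show ht (Node.ch j0 (childN a j)) = _
    simp [ht]
    rw [ih j h']


def leafVar (hd : 0 < d) : (m : ℕ) → TEVar d k (m + 1)
  | 0 => .leaf
  | m + 1 => .child ⟨0, hd⟩ (leafVar hd m)

theorem thrifty_leafVar (hd : 0 < d) (hk : 0 < k) :
    ∀ (m : ℕ) (I : TEVar d k (m + 1) → Fin k), ThriftyVar d k hk (m + 1) I (leafVar hd m)
  | 0, _ => trivial
  | m + 1, I => thrifty_leafVar hd hk m (fun x => I (.child ⟨0, hd⟩ x))

def toN (hd : 0 < d) (m : ℕ) : ℕ → ℕ → Node d (m + 1)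
  | 0, _ => .rt
  | l + 1, i => childN (toN hd m l (i / d)) ⟨i % d, Nat.mod_lt _ hd⟩

theorem ht_toN (hd : 0 < d) (m : ℕ) : ∀ l, l ≤ m → ∀ i, ht (toN hd m l i) = m + 1 - l := by
  intro l
  induction l with
  | zero => intro _ i; simp [toN, ht]
  | succ l ih =>
    intro hl i
    show ht (childN (toN hd m l (i / d)) _) = _
    rw [ht_childN _ _ (by rw [ih (by omega) (i / d)]; omega), ih (by omega) (i / d)]
    omega

def childT (m : ℕ) (v : TNode d (m + 1)) (j : Fin d) : TNode d (m + 1) :=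
  if hlt : (v.1 : ℕ) + 1 < m + 1 then
    ⟨⟨(v.1 : ℕ) + 1, hlt⟩, ⟨d * (v.2 : ℕ) + (j : ℕ), by
      have h2 := v.2.2
      have h3 := j.2
      have h4 : d * (v.2 : ℕ) + (j : ℕ) < d * ((v.2 : ℕ) + 1) := by
        have : d * ((v.2 : ℕ) + 1) = d * (v.2 : ℕ) + d := by ring
        omega
      calc d * (v.2 : ℕ) + (j : ℕ) < d * ((v.2 : ℕ) + 1) := h4
        _ ≤ d * d ^ ((v.1 : ℕ)) := Nat.mul_le_mul_left d h2
        _ = d ^ ((v.1 : ℕ) + 1) := by rw [pow_succ, Nat.mul_comm]⟩⟩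
  else v

theorem isChild_childT {m : ℕ} {v : TNode d (m + 1)} (j : Fin d)
    (hlt : (v.1 : ℕ) + 1 < m + 1) : IsChild d (m + 1) (childT m v j) v := by
  unfold childT
  rw [dif_pos hlt]
  exact ⟨rfl, j, rfl⟩

def toNode (hd : 0 < d) (m : ℕ) (v : TNode d (m + 1)) : Node d (m + 1) :=
  toN hd m v.1 v.2

theorem toNode_childT (hd : 0 < d) {m : ℕ} {v : TNode d (m + 1)} (j : Fin d)
    (hlt : (v.1 : ℕ) + 1 < m + 1) :
    toNode hd m (childT m v j) = childN (toNode hd m v) j := by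
  unfold toNode childT
  rw [dif_pos hlt]
  show childN (toN hd m (v.1 : ℕ) ((d * (v.2 : ℕ) + (j : ℕ)) / d)) _ = _
  have h1 : (d * (v.2 : ℕ) + (j : ℕ)) / d = (v.2 : ℕ) := by
    rw [Nat.mul_add_div hd, Nat.div_eq_of_lt j.2]
    omega
  have h2 : (d * (v.2 : ℕ) + (j : ℕ)) % d = (j : ℕ) := by
    rw [Nat.mul_add_mod]; exact Nat.mod_eq_of_lt j.2
  rw [h1]
  congr 1
  exact Fin.ext h2

theorem ht_toNode_leaf (hd : 0 < d) {m : ℕ} {v : TNode d (m + 1)}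
    (hv : (v.1 : ℕ) = m) : ht (toNode hd m v) = 1 := by
  unfold toNode
  rw [ht_toN hd m (v.1 : ℕ) (by omega) (v.2 : ℕ)]
  omega

theorem move_new {V : Type} {child : V → V → Prop} {C C' : FConfig V}
    (hm : FMove child C C') (hb : C.BlackOnly) {u : V}
    (hu1 : C'.b u = 1) (hu0 : C.b u ≠ 1) :
    (∀ c, child c u → C.b c = 1) ∧ ∀ u', C'.b u' = 1 → C.b u' ≠ 1 → u' = u := by
  obtain ⟨hwhole, hw0⟩ := hb
  rcases hm with ⟨v, h1, _, h3⟩ | ⟨v, h1, _, h3⟩ | ⟨v, hch, _, _, h3, h4⟩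
  · exfalso
    by_cases h : u = v
    · subst h
      rcases (hwhole u).1 with h' | h'
      · rw [hu1, h'] at h1; linarith
      · exact hu0 h'
    · exact hu0 ((h3 u h).1 ▸ hu1)
  · exfalso
    by_cases h : u = v
    · subst h; exact hu0 (h1 ▸ hu1)
    · exact hu0 ((h3 u h).1 ▸ hu1)
  · have key : ∀ x, C'.b x = 1 → C.b x ≠ 1 → x = v := by
      intro x hx1 hx0
      by_contra hne
      by_cases hcx : child x v
      · have hle := (h3 x hcx).1
        rcases (hwhole x).1 with h' | h'
        · rw [hx1, h'] at hle; linarith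
        · exact hx0 h'
      · exact hx0 ((h4 x hne hcx).1 ▸ hx1)
    have huv := key u hu1 hu0
    subst huv
    refine ⟨fun c hc => ?_, key⟩
    have := hch c hc
    have := hw0 c
    linarith


section BP

attribute [local instance] Classical.propDecidable

variable (m n : ℕ) (hd : 0 < d) (hk : 0 < k)
variable (C : ℕ → FConfig (TNode d (m + 1)))
variable {R : Type} [Fintype R] (out : Fin k → R)

/-- State space of the branching program. -/
abbrev StQ : Type :=
  (Σ t : Fin (n + 1), ({v : TNode d (m + 1) // (C t.val).b v = 1} → Fin k)) ⊕ R

noncomputable def qArgs (t : ℕ) (σ : {v : TNode d (m + 1) // (C t).b v = 1} → Fin k)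
    (u : TNode d (m + 1)) : Fin d → Fin k :=
  fun j => if hc : (C t).b (childT m u j) = 1 then σ ⟨childT m u j, hc⟩ else ⟨0, hk⟩

noncomputable def query (t : ℕ) (σ : {v : TNode d (m + 1) // (C t).b v = 1} → Fin k) :
    TEVar d k (m + 1) :=
  if hv : ∃ v : TNode d (m + 1), (C (t + 1)).b v = 1 ∧ ¬ (C t).b v = 1 then
    varAt (toNode hd m hv.choose) (qArgs m hk C t σ hv.choose)
  else leafVar hd m

noncomputable def labelF : StQ (k := k) m n C (R := R) → (TEVar d k (m + 1)) ⊕ R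
  | .inr r => .inr r
  | .inl s =>
      if hr : (C s.1.val).b (troot d (m + 1) (Nat.succ_pos m)) = 1 then
        .inr (out (s.2 ⟨_, hr⟩))
      else .inl (query m hd hk C s.1.val s.2)

noncomputable def nextF : StQ (k := k) m n C (R := R) → Fin k → StQ (k := k) m n C (R := R)
  | .inr r, _ => .inr r
  | .inl s, a =>
      if hlt : (s.1 : ℕ) < n then
        .inl ⟨⟨(s.1 : ℕ) + 1, by omega⟩,
          fun u => if hc : (C s.1.val).b u.1 = 1 then s.2 ⟨u.1, hc⟩ else a⟩
      else .inl s

noncomputable def pebBP : DBP (TEVar d k (m + 1)) k R where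
  Q := StQ (k := k) m n C (R := R)
  fin := inferInstance
  start := Sum.inl ⟨⟨0, Nat.succ_pos n⟩, fun _ => ⟨0, hk⟩⟩
  label := labelF m n hd hk C out
  next := nextF m n C

noncomputable def sstar (I : TEVar d k (m + 1) → Fin k) (t : ℕ) :
    {v : TNode d (m + 1) // (C t).b v = 1} → Fin k :=
  fun u => nval hk I (toNode hd m u.1)

theorem query_spec (I : TEVar d k (m + 1) → Fin k) (t : ℕ)
    (hmove : FMove (IsChild d (m + 1)) (C t) (C (t + 1))) (hb : (C t).BlackOnly) :
    ThriftyVar d k hk (m + 1) I (query m hd hk C t (sstar m hd hk C I t)) ∧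
    ∀ u : TNode d (m + 1), (C (t + 1)).b u = 1 → (C t).b u ≠ 1 →
      I (query m hd hk C t (sstar m hd hk C I t)) = nval hk I (toNode hd m u) := by
  unfold query
  by_cases hv : ∃ v : TNode d (m + 1), (C (t + 1)).b v = 1 ∧ ¬ (C t).b v = 1
  · rw [dif_pos hv]
    obtain ⟨hw1, hw0⟩ := hv.choose_spec
    obtain ⟨hchpeb, huniq⟩ := move_new hmove hb hw1 hw0
    have key : ThriftyVar d k hk (m + 1) I
        (varAt (toNode hd m hv.choose) (qArgs m hk C t (sstar m hd hk C I t) hv.choose)) ∧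
        I (varAt (toNode hd m hv.choose) (qArgs m hk C t (sstar m hd hk C I t) hv.choose))
          = nval hk I (toNode hd m hv.choose) := by
      by_cases hlt : (hv.choose.1 : ℕ) + 1 < m + 1
      · have hargs : qArgs m hk C t (sstar m hd hk C I t) hv.choose
            = fun j => nval hk I (childN (toNode hd m hv.choose) j) := by
          funext j
          have hpeb : (C t).b (childT m hv.choose j) = 1 :=
            hchpeb _ (isChild_childT j hlt)
          unfold qArgs
          rw [dif_pos hpeb]
          show nval hk I (toNode hd m (childT m hv.choose j)) = _
          rw [toNode_childT hd j hlt]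
        rw [hargs]
        exact ⟨thrifty_varAt hk _ I, nval_varAt hk _ I⟩
      · have hleaf : ht (toNode hd m hv.choose) = 1 := by
          have h2 := hv.choose.1.2
          exact ht_toNode_leaf hd (by omega)
        rw [varAt_irrel _ hleaf _ (fun j => nval hk I (childN (toNode hd m hv.choose) j))]
        exact ⟨thrifty_varAt hk _ I, nval_varAt hk _ I⟩
    refine ⟨key.1, fun u hu1 hu0 => ?_⟩
    rw [huniq u hu1 hu0]
    exact key.2
  · rw [dif_neg hv]
    exact ⟨thrifty_leafVar hd hk m I, fun u hu1 hu0 => (hv ⟨u, hu1, hu0⟩).elim⟩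

theorem traj (h0 : C 0 = FConfig.zero _)
    (hblack : ∀ t ≤ n, (C t).BlackOnly)
    (hmove : ∀ t < n, FMove (IsChild d (m + 1)) (C t) (C (t + 1)))
    (I : TEVar d k (m + 1) → Fin k) :
    ∀ t, (htn : t ≤ n) →
    (∀ s, s < t → (C s).b (troot d (m + 1) (Nat.succ_pos m)) ≠ 1) →
    ((pebBP m n hd hk C out).step I)^[t] (pebBP m n hd hk C out).start
      = Sum.inl ⟨⟨t, by omega⟩, sstar m hd hk C I t⟩ := by
  intro t
  induction t with
  | zero =>
    intro _ _
    have he : (fun _ : {v : TNode d (m + 1) // (C 0).b v = 1} => (⟨0, hk⟩ : Fin k))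
        = sstar m hd hk C I 0 := by
      funext u
      obtain ⟨v0, hv0⟩ := u
      rw [h0] at hv0
      simp [FConfig.zero] at hv0
    exact congrArg Sum.inl (congrArg (Sigma.mk (⟨0, Nat.succ_pos n⟩ : Fin (n + 1))) he)
  | succ t ih =>
    intro htn hroot
    rw [Function.iterate_succ_apply',
      ih (by omega) (fun s hs => hroot s (by omega))]
    have hr : ¬ (C t).b (troot d (m + 1) (Nat.succ_pos m)) = 1 := hroot t (by omega)
    have hlt : t < n := by omega
    have hlab : (pebBP m n hd hk C out).label
        (Sum.inl ⟨⟨t, by omega⟩, sstar m hd hk C I t⟩)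
        = Sum.inl (query m hd hk C t (sstar m hd hk C I t)) := dif_neg hr
    have hstep : (pebBP m n hd hk C out).step I
        (Sum.inl ⟨⟨t, by omega⟩, sstar m hd hk C I t⟩)
        = nextF m n C (Sum.inl ⟨⟨t, by omega⟩, sstar m hd hk C I t⟩)
            (I (query m hd hk C t (sstar m hd hk C I t))) := by
      unfold DBP.step
      rw [hlab]
      rfl
    rw [hstep]
    have hnext : nextF m n C (R := R) (Sum.inl ⟨⟨t, by omega⟩, sstar m hd hk C I t⟩)
        (I (query m hd hk C t (sstar m hd hk C I t)))
        = Sum.inl ⟨⟨t + 1, by omega⟩, fun u =>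
            if hc : (C t).b u.1 = 1 then sstar m hd hk C I t ⟨u.1, hc⟩
            else I (query m hd hk C t (sstar m hd hk C I t))⟩ := dif_pos hlt
    rw [hnext]
    refine congrArg Sum.inl (congrArg (Sigma.mk (⟨t + 1, by omega⟩ : Fin (n + 1))) ?_)
    funext u
    by_cases hc : (C t).b u.1 = 1
    · rw [dif_pos hc]; rfl
    · rw [dif_neg hc]
      exact (query_spec m hd hk C I t (hmove t hlt) (hblack t (by omega))).2 u.1 u.2 hc


set_option maxHeartbeats 1000000 in
theorem constructBP (p : ℕ)
    (h0 : C 0 = FConfig.zero _)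
    (hvalid : ∀ t ≤ n, (C t).Valid)
    (hblack : ∀ t ≤ n, (C t).BlackOnly)
    (hmove : ∀ t < n, FMove (IsChild d (m + 1)) (C t) (C (t + 1)))
    (hgoal : ∃ t, t ≤ n ∧ (C t).b (troot d (m + 1) (Nat.succ_pos m)) = 1)
    (hwt : ∀ t ≤ n, (C t).weight ≤ (p : ℝ)) :
    1 ≤ p ∧
    (pebBP m n hd hk C out).Computes (fun I => out (rootValue d k hk (m + 1) I)) ∧
    DBPThrifty d k (m + 1) hk (pebBP m n hd hk C out) ∧
    (pebBP m n hd hk C out).size ≤ (n + 1) * k ^ p + Fintype.card R := by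
  set rt0 : TNode d (m + 1) := troot d (m + 1) (Nat.succ_pos m) with hrt0
  set t0 := Nat.find hgoal with ht0def
  have ht0 : t0 ≤ n ∧ (C t0).b rt0 = 1 := Nat.find_spec hgoal
  have hroot : ∀ s, s < t0 → ¬ (C s).b rt0 = 1 := by
    intro s hs h1
    exact Nat.find_min hgoal hs ⟨by omega, h1⟩
  have htraj : ∀ I, ((pebBP m n hd hk C out).step I)^[t0] (pebBP m n hd hk C out).start
      = Sum.inl ⟨⟨t0, by omega⟩, sstar m hd hk C I t0⟩ :=
    fun I => traj m n hd hk C out h0 hblack hmove I t0 ht0.1 hroot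
  have hlabfin : ∀ I : TEVar d k (m + 1) → Fin k,
      (pebBP m n hd hk C out).label (Sum.inl ⟨⟨t0, by omega⟩, sstar m hd hk C I t0⟩)
      = Sum.inr (out (nval hk I (toNode hd m rt0))) := fun I => dif_pos ht0.2
  have hp1 : 1 ≤ p := by
    have hw := hwt t0 ht0.1
    have hv := hvalid t0 ht0.1
    have hs : (C t0).b rt0 + (C t0).w rt0 ≤ ∑ v, ((C t0).b v + (C t0).w v) :=
      Finset.single_le_sum (f := fun v => (C t0).b v + (C t0).w v)
        (fun i _ => add_nonneg (hv i).1 (hv i).2.1) (Finset.mem_univ _)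
    have h1 : (1 : ℝ) ≤ (C t0).weight := by
      unfold FConfig.weight
      have := (hv rt0).2.1
      rw [ht0.2] at hs
      linarith
    have := h1.trans hw
    exact_mod_cast this
  refine ⟨hp1, ?_, ?_, ?_⟩
  · intro I
    refine ⟨t0, ?_⟩
    rw [htraj I, hlabfin I]
    rfl
  · intro I t v hlab
    by_cases hts : t < t0
    · rw [traj m n hd hk C out h0 hblack hmove I t (by omega)
        (fun s hs => hroot s (by omega))] at hlab
      have hq : (pebBP m n hd hk C out).label (Sum.inl ⟨⟨t, by omega⟩, sstar m hd hk C I t⟩)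
          = Sum.inl (query m hd hk C t (sstar m hd hk C I t)) := dif_neg (hroot t hts)
      rw [hq] at hlab
      injection hlab with h
      rw [← h]
      exact (query_spec m hd hk C I t (hmove t (by omega)) (hblack t (by omega))).1
    · have hstab : ∀ s, ((pebBP m n hd hk C out).step I)^[t0 + s] (pebBP m n hd hk C out).start
          = Sum.inl ⟨⟨t0, by omega⟩, sstar m hd hk C I t0⟩ := by
        intro s
        induction s with
        | zero => exact htraj I
        | succ s ih =>
          rw [show t0 + (s + 1) = (t0 + s) + 1 from rfl, Function.iterate_succ_apply', ih]
          show (pebBP m n hd hk C out).step I _ = _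
          unfold DBP.step
          rw [hlabfin I]
      have h2 := hstab (t - t0)
      rw [show t0 + (t - t0) = t from by omega] at h2
      rw [h2, hlabfin I] at hlab
      cases hlab
  · have hcard : ∀ t : Fin (n + 1),
        Fintype.card {v : TNode d (m + 1) // (C t.val).b v = 1} ≤ p := by
      intro t
      have htn : (t : ℕ) ≤ n := by omega
      have hbl := hblack t htn
      have hv := hvalid t htn
      have hw := hwt t htn
      have hc1 : (Fintype.card {v : TNode d (m + 1) // (C t.val).b v = 1} : ℝ)
          ≤ (C t.val).weight := by
        rw [Fintype.card_subtype]
        unfold FConfig.weight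
        calc ((Finset.univ.filter fun v : TNode d (m + 1) => (C t.val).b v = 1).card : ℝ)
            = ∑ _v ∈ Finset.univ.filter fun v : TNode d (m + 1) => (C t.val).b v = 1, (1 : ℝ) := by
              rw [Finset.sum_const]; simp
          _ = ∑ v ∈ Finset.univ.filter fun v : TNode d (m + 1) => (C t.val).b v = 1,
                ((C t.val).b v + (C t.val).w v) := by
              refine Finset.sum_congr rfl (fun v hv' => ?_)
              rw [(Finset.mem_filter.mp hv').2, hbl.2 v]
              norm_num
          _ ≤ ∑ v, ((C t.val).b v + (C t.val).w v) :=
              Finset.sum_le_sum_of_subset_of_nonneg (Finset.filter_subset _ _)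
                (fun i _ _ => add_nonneg (hv i).1 (hv i).2.1)
      have := hc1.trans hw
      exact_mod_cast this
    have hsize : (pebBP m n hd hk C out).size
        = (∑ t : Fin (n + 1), k ^ Fintype.card {v : TNode d (m + 1) // (C t.val).b v = 1})
          + Fintype.card R := by
      show Fintype.card (StQ (k := k) m n C (R := R)) = _
      rw [Fintype.card_sum, Fintype.card_sigma]
      congr 1
      refine Finset.sum_congr rfl (fun t _ => ?_)
      rw [Fintype.card_fun, Fintype.card_fin]
    rw [hsize]
    have hsum : (∑ t : Fin (n + 1), k ^ Fintype.card {v : TNode d (m + 1) // (C t.val).b v = 1})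
        ≤ (n + 1) * k ^ p := by
      calc (∑ t : Fin (n + 1), k ^ Fintype.card {v : TNode d (m + 1) // (C t.val).b v = 1})
          ≤ ∑ _t : Fin (n + 1), k ^ p :=
            Finset.sum_le_sum (fun i _ => Nat.pow_le_pow_right hk (hcard i))
        _ = (n + 1) * k ^ p := by
            rw [Finset.sum_const, Finset.card_univ, Fintype.card_fin, smul_eq_mul]
    omega

end BP

end BlackPebblingBP

open BlackPebblingBP in
/-- If `T_d^h` can be black pebbled with `p` pebbles, then there are deterministic
thrifty `k`-way branching programs with `O(k^p)` states (as `k → ∞`, with `d, h, p`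
fixed) solving the function problem `FT_d^h(k)` and hence also the Boolean problem
`BT_d^h(k)`. -/
theorem blackPebbling_to_thrifty_DBP (d h p : ℕ) (hd : 2 ≤ d) (hh : 2 ≤ h)
    (hpeb : BlackPebbles d h (by omega) (p : ℝ)) :
    ∃ c : ℕ, ∀ k : ℕ, ∀ hk2 : 2 ≤ k,
      (∃ B : DBP (TEVar d k h) k (Fin k),
        B.Computes (rootValue d k (by omega) h) ∧
        DBPThrifty d k h (by omega) B ∧ B.size ≤ c * k ^ p) ∧
      (∃ B' : DBP (TEVar d k h) k Bool,
        B'.Computes (BTfun d k (by omega) h) ∧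
        DBPThrifty d k h (by omega) B' ∧ B'.size ≤ c * k ^ p) := by
  obtain ⟨m, rfl⟩ : ∃ m, h = m + 1 := ⟨h - 1, by omega⟩
  unfold BlackPebbles PebblingLE at hpeb
  obtain ⟨n, C, h0, hend, hvalid, hblack, hmove, hgoal, hwt⟩ := hpeb
  refine ⟨n + 2, fun k hk2 => ?_⟩
  have hk : 0 < k := by omega
  have hd0 : 0 < d := by omega
  have hkp : k ≤ k ^ p := by
    have h1 : 1 ≤ p := (constructBP m n hd0 hk C (fun a => a) p h0 hvalid hblack hmove hgoal hwt).1
    exact Nat.le_self_pow (by omega) k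
  constructor
  · obtain ⟨hp1, hcomp, hthr, hsize⟩ :=
      constructBP m n hd0 hk C (fun a : Fin k => a) p h0 hvalid hblack hmove hgoal hwt
    refine ⟨pebBP m n hd0 hk C (fun a : Fin k => a), hcomp, hthr, ?_⟩
    rw [Fintype.card_fin] at hsize
    calc (pebBP m n hd0 hk C (fun a : Fin k => a)).size ≤ (n + 1) * k ^ p + k := hsize
      _ ≤ (n + 1) * k ^ p + k ^ p := Nat.add_le_add_left hkp _
      _ = (n + 2) * k ^ p := by ring
  · obtain ⟨hp1, hcomp, hthr, hsize⟩ :=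
      constructBP m n hd0 hk C (fun a : Fin k => decide (a = ⟨0, hk⟩)) p h0 hvalid hblack hmove hgoal hwt
    refine ⟨pebBP m n hd0 hk C (fun a : Fin k => decide (a = ⟨0, hk⟩)), hcomp, hthr, ?_⟩
    have hb : Fintype.card Bool = 2 := by simp
    rw [hb] at hsize
    calc (pebBP m n hd0 hk C (fun a : Fin k => decide (a = ⟨0, hk⟩))).size
        ≤ (n + 1) * k ^ p + 2 := hsize
      _ ≤ (n + 1) * k ^ p + k ^ p := Nat.add_le_add_left (by omega) _
      _ = (n + 2) * k ^ p := by ring
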